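/- Let g ≥ 1 and let t_1, …, t_n be cycle types of permutations of a 5-element set (each t_i encoded as the multiset of cycle lengths ≥ 2, so the possible types are {5}, {4}, {3,2}, {3}, {2,2}, {2} and the empty type). If the number of indices i for which t_i is the type of an odd permutation (i.e. t_i ∈ {{4}, {3,2}, {2}}) is even, then there exist permutations a_1, b_1, …, a_g, b_g, c_1, …, c_n of Fin 5 such that (∏_{i=1}^g [a_i,b_i]) · (∏_{j=1}^n c_j) = 1, each c_j has cycle type t_j, and the subgroup of Perm (Fin 5) generated by all the a_i, b_i, c_j acts transitively on Fin 5. (This is the generating-vector form, via the Riemann existence theorem, of: a 5-fold covering f : X → Y of compact Riemann surfaces with g_Y = g ≥ 1 and ramification data (t_1,…,t_n) exists if and only if the tuple is even.) -/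

import Mathlib

open Equiv
open scoped commutatorElement

/-- An odd cycle type for permutations of a 5-element set: the cycle types of the
odd permutations, i.e. `[4,1]`, `[3,2]` and `[2,1,1,1]` in the paper's notation. -/
def IsOddType (t : Multiset ℕ) : Prop := t = {4} ∨ t = {3, 2} ∨ t = {2}

instance : DecidablePred IsOddType := fun t => by unfold IsOddType; infer_instance

/-- Witness table: for each even permutation `p` of `Fin 5`, a pair `(a, b)` with
`⁅a, b⁆ * p = 1` and `a * b` a 5-cycle. -/
def L : List (Perm (Fin 5) × Perm (Fin 5) × Perm (Fin 5)) := [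
  (1, 1, Equiv.swap (0:Fin 5) 1 * Equiv.swap (1:Fin 5) 2 * Equiv.swap (2:Fin 5) 3 * Equiv.swap (3:Fin 5) 4),
  (Equiv.swap (2:Fin 5) 3 * Equiv.swap (3:Fin 5) 4, Equiv.swap (3:Fin 5) 4, Equiv.swap (0:Fin 5) 1 * Equiv.swap (1:Fin 5) 4 * Equiv.swap (4:Fin 5) 2),
  (Equiv.swap (2:Fin 5) 4 * Equiv.swap (4:Fin 5) 3, Equiv.swap (3:Fin 5) 4, Equiv.swap (0:Fin 5) 1 * Equiv.swap (1:Fin 5) 3 * Equiv.swap (3:Fin 5) 2),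
  (Equiv.swap (1:Fin 5) 2 * Equiv.swap (3:Fin 5) 4, Equiv.swap (3:Fin 5) 4, Equiv.swap (0:Fin 5) 3 * Equiv.swap (3:Fin 5) 1 * Equiv.swap (2:Fin 5) 4),
  (Equiv.swap (1:Fin 5) 2 * Equiv.swap (2:Fin 5) 3, Equiv.swap (2:Fin 5) 3, Equiv.swap (0:Fin 5) 3 * Equiv.swap (3:Fin 5) 1 * Equiv.swap (1:Fin 5) 4),
  (Equiv.swap (1:Fin 5) 2 * Equiv.swap (2:Fin 5) 4, Equiv.swap (2:Fin 5) 3 * Equiv.swap (3:Fin 5) 4, Equiv.swap (0:Fin 5) 4 * Equiv.swap (4:Fin 5) 1),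
  (Equiv.swap (1:Fin 5) 3 * Equiv.swap (3:Fin 5) 2, Equiv.swap (2:Fin 5) 3, Equiv.swap (0:Fin 5) 2 * Equiv.swap (2:Fin 5) 1 * Equiv.swap (1:Fin 5) 4),
  (Equiv.swap (1:Fin 5) 3 * Equiv.swap (3:Fin 5) 4, Equiv.swap (3:Fin 5) 4, Equiv.swap (0:Fin 5) 2 * Equiv.swap (2:Fin 5) 4 * Equiv.swap (4:Fin 5) 1),
  (Equiv.swap (1:Fin 5) 3 * Equiv.swap (2:Fin 5) 4, Equiv.swap (2:Fin 5) 4, Equiv.swap (0:Fin 5) 2 * Equiv.swap (2:Fin 5) 1 * Equiv.swap (3:Fin 5) 4),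
  (Equiv.swap (1:Fin 5) 4 * Equiv.swap (4:Fin 5) 2, Equiv.swap (2:Fin 5) 4 * Equiv.swap (4:Fin 5) 3, Equiv.swap (0:Fin 5) 2 * Equiv.swap (2:Fin 5) 1),
  (Equiv.swap (1:Fin 5) 4 * Equiv.swap (4:Fin 5) 3, Equiv.swap (3:Fin 5) 4, Equiv.swap (0:Fin 5) 2 * Equiv.swap (2:Fin 5) 3 * Equiv.swap (3:Fin 5) 1),
  (Equiv.swap (1:Fin 5) 4 * Equiv.swap (2:Fin 5) 3, Equiv.swap (2:Fin 5) 3, Equiv.swap (0:Fin 5) 2 * Equiv.swap (2:Fin 5) 1 * Equiv.swap (3:Fin 5) 4),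
  (Equiv.swap (0:Fin 5) 1 * Equiv.swap (3:Fin 5) 4, Equiv.swap (3:Fin 5) 4, Equiv.swap (0:Fin 5) 2 * Equiv.swap (2:Fin 5) 4 * Equiv.swap (1:Fin 5) 3),
  (Equiv.swap (0:Fin 5) 1 * Equiv.swap (2:Fin 5) 3, Equiv.swap (2:Fin 5) 3, Equiv.swap (0:Fin 5) 2 * Equiv.swap (1:Fin 5) 4 * Equiv.swap (4:Fin 5) 3),
  (Equiv.swap (0:Fin 5) 1 * Equiv.swap (2:Fin 5) 4, Equiv.swap (2:Fin 5) 4, Equiv.swap (0:Fin 5) 2 * Equiv.swap (1:Fin 5) 3 * Equiv.swap (3:Fin 5) 4),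
  (Equiv.swap (0:Fin 5) 1 * Equiv.swap (1:Fin 5) 2, Equiv.swap (1:Fin 5) 2, Equiv.swap (0:Fin 5) 3 * Equiv.swap (3:Fin 5) 4 * Equiv.swap (4:Fin 5) 2),
  (Equiv.swap (0:Fin 5) 1 * Equiv.swap (1:Fin 5) 2 * Equiv.swap (2:Fin 5) 3 * Equiv.swap (3:Fin 5) 4, Equiv.swap (2:Fin 5) 4 * Equiv.swap (4:Fin 5) 3, Equiv.swap (0:Fin 5) 4 * Equiv.swap (4:Fin 5) 1 * Equiv.swap (1:Fin 5) 3 * Equiv.swap (3:Fin 5) 2),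
  (Equiv.swap (0:Fin 5) 1 * Equiv.swap (1:Fin 5) 2 * Equiv.swap (2:Fin 5) 4 * Equiv.swap (4:Fin 5) 3, Equiv.swap (2:Fin 5) 3 * Equiv.swap (3:Fin 5) 4, Equiv.swap (0:Fin 5) 3 * Equiv.swap (3:Fin 5) 1 * Equiv.swap (1:Fin 5) 4 * Equiv.swap (4:Fin 5) 2),
  (Equiv.swap (0:Fin 5) 1 * Equiv.swap (1:Fin 5) 3 * Equiv.swap (3:Fin 5) 4 * Equiv.swap (4:Fin 5) 2, Equiv.swap (2:Fin 5) 4 * Equiv.swap (4:Fin 5) 3, Equiv.swap (0:Fin 5) 2 * Equiv.swap (1:Fin 5) 4),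
  (Equiv.swap (0:Fin 5) 1 * Equiv.swap (1:Fin 5) 3, Equiv.swap (1:Fin 5) 2 * Equiv.swap (2:Fin 5) 3, Equiv.swap (0:Fin 5) 4 * Equiv.swap (4:Fin 5) 3),
  (Equiv.swap (0:Fin 5) 1 * Equiv.swap (1:Fin 5) 3 * Equiv.swap (3:Fin 5) 2 * Equiv.swap (2:Fin 5) 4, Equiv.swap (2:Fin 5) 3 * Equiv.swap (3:Fin 5) 4, Equiv.swap (0:Fin 5) 4 * Equiv.swap (1:Fin 5) 2),
  (Equiv.swap (0:Fin 5) 1 * Equiv.swap (1:Fin 5) 4 * Equiv.swap (4:Fin 5) 3 * Equiv.swap (3:Fin 5) 2, Equiv.swap (2:Fin 5) 3 * Equiv.swap (3:Fin 5) 4, Equiv.swap (0:Fin 5) 2 * Equiv.swap (1:Fin 5) 3),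
  (Equiv.swap (0:Fin 5) 1 * Equiv.swap (1:Fin 5) 4, Equiv.swap (1:Fin 5) 2 * Equiv.swap (2:Fin 5) 3 * Equiv.swap (3:Fin 5) 4, Equiv.swap (0:Fin 5) 4),
  (Equiv.swap (0:Fin 5) 1 * Equiv.swap (1:Fin 5) 4 * Equiv.swap (4:Fin 5) 2 * Equiv.swap (2:Fin 5) 3, Equiv.swap (2:Fin 5) 4 * Equiv.swap (4:Fin 5) 3, Equiv.swap (0:Fin 5) 3 * Equiv.swap (1:Fin 5) 2),
  (Equiv.swap (0:Fin 5) 2 * Equiv.swap (2:Fin 5) 1, Equiv.swap (1:Fin 5) 2, Equiv.swap (0:Fin 5) 3 * Equiv.swap (3:Fin 5) 4 * Equiv.swap (4:Fin 5) 1),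
  (Equiv.swap (0:Fin 5) 2 * Equiv.swap (2:Fin 5) 3 * Equiv.swap (3:Fin 5) 4 * Equiv.swap (4:Fin 5) 1, Equiv.swap (2:Fin 5) 4 * Equiv.swap (4:Fin 5) 3, Equiv.swap (0:Fin 5) 3 * Equiv.swap (3:Fin 5) 2 * Equiv.swap (2:Fin 5) 1 * Equiv.swap (1:Fin 5) 4),
  (Equiv.swap (0:Fin 5) 2 * Equiv.swap (2:Fin 5) 4 * Equiv.swap (4:Fin 5) 3 * Equiv.swap (3:Fin 5) 1, Equiv.swap (2:Fin 5) 3 * Equiv.swap (3:Fin 5) 4, Equiv.swap (0:Fin 5) 4 * Equiv.swap (4:Fin 5) 2 * Equiv.swap (2:Fin 5) 1 * Equiv.swap (1:Fin 5) 3),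
  (Equiv.swap (0:Fin 5) 2 * Equiv.swap (3:Fin 5) 4, Equiv.swap (3:Fin 5) 4, Equiv.swap (0:Fin 5) 1 * Equiv.swap (1:Fin 5) 3 * Equiv.swap (2:Fin 5) 4),
  (Equiv.swap (0:Fin 5) 2 * Equiv.swap (2:Fin 5) 3, Equiv.swap (2:Fin 5) 3, Equiv.swap (0:Fin 5) 1 * Equiv.swap (1:Fin 5) 4 * Equiv.swap (4:Fin 5) 3),
  (Equiv.swap (0:Fin 5) 2 * Equiv.swap (2:Fin 5) 4, Equiv.swap (2:Fin 5) 3 * Equiv.swap (3:Fin 5) 4, Equiv.swap (0:Fin 5) 1 * Equiv.swap (1:Fin 5) 4),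
  (Equiv.swap (0:Fin 5) 2 * Equiv.swap (1:Fin 5) 3, Equiv.swap (1:Fin 5) 2 * Equiv.swap (2:Fin 5) 4 * Equiv.swap (4:Fin 5) 3, Equiv.swap (0:Fin 5) 3 * Equiv.swap (1:Fin 5) 2 * Equiv.swap (2:Fin 5) 4),
  (Equiv.swap (0:Fin 5) 2 * Equiv.swap (2:Fin 5) 1 * Equiv.swap (1:Fin 5) 3 * Equiv.swap (3:Fin 5) 4, Equiv.swap (1:Fin 5) 2 * Equiv.swap (2:Fin 5) 3, Equiv.swap (0:Fin 5) 1 * Equiv.swap (3:Fin 5) 4),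
  (Equiv.swap (0:Fin 5) 2 * Equiv.swap (2:Fin 5) 4 * Equiv.swap (4:Fin 5) 1 * Equiv.swap (1:Fin 5) 3, Equiv.swap (1:Fin 5) 2 * Equiv.swap (2:Fin 5) 4 * Equiv.swap (4:Fin 5) 3, Equiv.swap (0:Fin 5) 3 * Equiv.swap (3:Fin 5) 2 * Equiv.swap (2:Fin 5) 4),
  (Equiv.swap (0:Fin 5) 2 * Equiv.swap (1:Fin 5) 4, Equiv.swap (1:Fin 5) 2 * Equiv.swap (2:Fin 5) 3 * Equiv.swap (3:Fin 5) 4, Equiv.swap (0:Fin 5) 4 * Equiv.swap (1:Fin 5) 2 * Equiv.swap (2:Fin 5) 3),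
  (Equiv.swap (0:Fin 5) 2 * Equiv.swap (2:Fin 5) 1 * Equiv.swap (1:Fin 5) 4 * Equiv.swap (4:Fin 5) 3, Equiv.swap (1:Fin 5) 2 * Equiv.swap (2:Fin 5) 4 * Equiv.swap (4:Fin 5) 3, Equiv.swap (0:Fin 5) 1 * Equiv.swap (1:Fin 5) 2 * Equiv.swap (2:Fin 5) 3),
  (Equiv.swap (0:Fin 5) 2 * Equiv.swap (2:Fin 5) 3 * Equiv.swap (3:Fin 5) 1 * Equiv.swap (1:Fin 5) 4, Equiv.swap (1:Fin 5) 2 * Equiv.swap (2:Fin 5) 3 * Equiv.swap (3:Fin 5) 4, Equiv.swap (0:Fin 5) 4 * Equiv.swap (4:Fin 5) 2 * Equiv.swap (2:Fin 5) 3),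
  (Equiv.swap (0:Fin 5) 3 * Equiv.swap (3:Fin 5) 4 * Equiv.swap (4:Fin 5) 2 * Equiv.swap (2:Fin 5) 1, Equiv.swap (2:Fin 5) 4 * Equiv.swap (4:Fin 5) 3, Equiv.swap (0:Fin 5) 4 * Equiv.swap (4:Fin 5) 3 * Equiv.swap (3:Fin 5) 1 * Equiv.swap (1:Fin 5) 2),
  (Equiv.swap (0:Fin 5) 3 * Equiv.swap (3:Fin 5) 1, Equiv.swap (1:Fin 5) 3 * Equiv.swap (3:Fin 5) 2, Equiv.swap (0:Fin 5) 4 * Equiv.swap (4:Fin 5) 1),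
  (Equiv.swap (0:Fin 5) 3 * Equiv.swap (3:Fin 5) 2 * Equiv.swap (2:Fin 5) 4 * Equiv.swap (4:Fin 5) 1, Equiv.swap (2:Fin 5) 3 * Equiv.swap (3:Fin 5) 4, Equiv.swap (0:Fin 5) 2 * Equiv.swap (1:Fin 5) 4),
  (Equiv.swap (0:Fin 5) 3 * Equiv.swap (3:Fin 5) 2, Equiv.swap (2:Fin 5) 3, Equiv.swap (0:Fin 5) 1 * Equiv.swap (1:Fin 5) 4 * Equiv.swap (4:Fin 5) 2),
  (Equiv.swap (0:Fin 5) 3 * Equiv.swap (3:Fin 5) 4, Equiv.swap (3:Fin 5) 4, Equiv.swap (0:Fin 5) 1 * Equiv.swap (1:Fin 5) 2 * Equiv.swap (2:Fin 5) 4),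
  (Equiv.swap (0:Fin 5) 3 * Equiv.swap (2:Fin 5) 4, Equiv.swap (2:Fin 5) 4, Equiv.swap (0:Fin 5) 1 * Equiv.swap (1:Fin 5) 2 * Equiv.swap (3:Fin 5) 4),
  (Equiv.swap (0:Fin 5) 3 * Equiv.swap (3:Fin 5) 4 * Equiv.swap (4:Fin 5) 1 * Equiv.swap (1:Fin 5) 2, Equiv.swap (1:Fin 5) 2 * Equiv.swap (2:Fin 5) 4 * Equiv.swap (4:Fin 5) 3, Equiv.swap (0:Fin 5) 4 * Equiv.swap (4:Fin 5) 3 * Equiv.swap (3:Fin 5) 2),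
  (Equiv.swap (0:Fin 5) 3 * Equiv.swap (1:Fin 5) 2, Equiv.swap (1:Fin 5) 2, Equiv.swap (0:Fin 5) 1 * Equiv.swap (2:Fin 5) 3 * Equiv.swap (3:Fin 5) 4),
  (Equiv.swap (0:Fin 5) 3 * Equiv.swap (3:Fin 5) 1 * Equiv.swap (1:Fin 5) 2 * Equiv.swap (2:Fin 5) 4, Equiv.swap (1:Fin 5) 2 * Equiv.swap (3:Fin 5) 4, Equiv.swap (0:Fin 5) 2 * Equiv.swap (2:Fin 5) 4),
  (Equiv.swap (0:Fin 5) 3 * Equiv.swap (3:Fin 5) 1 * Equiv.swap (1:Fin 5) 4 * Equiv.swap (4:Fin 5) 2, Equiv.swap (1:Fin 5) 2 * Equiv.swap (2:Fin 5) 4 * Equiv.swap (4:Fin 5) 3, Equiv.swap (0:Fin 5) 2 * Equiv.swap (2:Fin 5) 3 * Equiv.swap (3:Fin 5) 1),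
  (Equiv.swap (0:Fin 5) 3 * Equiv.swap (3:Fin 5) 2 * Equiv.swap (2:Fin 5) 1 * Equiv.swap (1:Fin 5) 4, Equiv.swap (1:Fin 5) 2 * Equiv.swap (3:Fin 5) 4, Equiv.swap (0:Fin 5) 1 * Equiv.swap (2:Fin 5) 3),
  (Equiv.swap (0:Fin 5) 3 * Equiv.swap (1:Fin 5) 4, Equiv.swap (1:Fin 5) 2 * Equiv.swap (2:Fin 5) 3 * Equiv.swap (3:Fin 5) 4, Equiv.swap (0:Fin 5) 4 * Equiv.swap (4:Fin 5) 1 * Equiv.swap (1:Fin 5) 2),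
  (Equiv.swap (0:Fin 5) 4 * Equiv.swap (4:Fin 5) 3 * Equiv.swap (3:Fin 5) 2 * Equiv.swap (2:Fin 5) 1, Equiv.swap (2:Fin 5) 3 * Equiv.swap (3:Fin 5) 4, Equiv.swap (0:Fin 5) 3 * Equiv.swap (3:Fin 5) 4 * Equiv.swap (4:Fin 5) 1 * Equiv.swap (1:Fin 5) 2),
  (Equiv.swap (0:Fin 5) 4 * Equiv.swap (4:Fin 5) 1, Equiv.swap (1:Fin 5) 4 * Equiv.swap (4:Fin 5) 3 * Equiv.swap (3:Fin 5) 2, Equiv.swap (0:Fin 5) 1),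
  (Equiv.swap (0:Fin 5) 4 * Equiv.swap (4:Fin 5) 2 * Equiv.swap (2:Fin 5) 3 * Equiv.swap (3:Fin 5) 1, Equiv.swap (2:Fin 5) 4 * Equiv.swap (4:Fin 5) 3, Equiv.swap (0:Fin 5) 2 * Equiv.swap (1:Fin 5) 3),
  (Equiv.swap (0:Fin 5) 4 * Equiv.swap (4:Fin 5) 2, Equiv.swap (2:Fin 5) 4 * Equiv.swap (4:Fin 5) 3, Equiv.swap (0:Fin 5) 1 * Equiv.swap (1:Fin 5) 2),
  (Equiv.swap (0:Fin 5) 4 * Equiv.swap (4:Fin 5) 3, Equiv.swap (3:Fin 5) 4, Equiv.swap (0:Fin 5) 1 * Equiv.swap (1:Fin 5) 2 * Equiv.swap (2:Fin 5) 3),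
  (Equiv.swap (0:Fin 5) 4 * Equiv.swap (2:Fin 5) 3, Equiv.swap (2:Fin 5) 3, Equiv.swap (0:Fin 5) 1 * Equiv.swap (1:Fin 5) 2 * Equiv.swap (3:Fin 5) 4),
  (Equiv.swap (0:Fin 5) 4 * Equiv.swap (4:Fin 5) 3 * Equiv.swap (3:Fin 5) 1 * Equiv.swap (1:Fin 5) 2, Equiv.swap (1:Fin 5) 2 * Equiv.swap (2:Fin 5) 3 * Equiv.swap (3:Fin 5) 4, Equiv.swap (0:Fin 5) 3 * Equiv.swap (3:Fin 5) 4 * Equiv.swap (4:Fin 5) 2),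
  (Equiv.swap (0:Fin 5) 4 * Equiv.swap (1:Fin 5) 2, Equiv.swap (1:Fin 5) 2, Equiv.swap (0:Fin 5) 1 * Equiv.swap (2:Fin 5) 4 * Equiv.swap (4:Fin 5) 3),
  (Equiv.swap (0:Fin 5) 4 * Equiv.swap (4:Fin 5) 1 * Equiv.swap (1:Fin 5) 2 * Equiv.swap (2:Fin 5) 3, Equiv.swap (1:Fin 5) 2 * Equiv.swap (3:Fin 5) 4, Equiv.swap (0:Fin 5) 2 * Equiv.swap (2:Fin 5) 3),
  (Equiv.swap (0:Fin 5) 4 * Equiv.swap (4:Fin 5) 1 * Equiv.swap (1:Fin 5) 3 * Equiv.swap (3:Fin 5) 2, Equiv.swap (1:Fin 5) 2 * Equiv.swap (2:Fin 5) 3, Equiv.swap (0:Fin 5) 2 * Equiv.swap (2:Fin 5) 4 * Equiv.swap (4:Fin 5) 3 * Equiv.swap (3:Fin 5) 1),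
  (Equiv.swap (0:Fin 5) 4 * Equiv.swap (4:Fin 5) 2 * Equiv.swap (2:Fin 5) 1 * Equiv.swap (1:Fin 5) 3, Equiv.swap (1:Fin 5) 2 * Equiv.swap (3:Fin 5) 4, Equiv.swap (0:Fin 5) 1 * Equiv.swap (2:Fin 5) 4),
  (Equiv.swap (0:Fin 5) 4 * Equiv.swap (1:Fin 5) 3, Equiv.swap (1:Fin 5) 2 * Equiv.swap (2:Fin 5) 4 * Equiv.swap (4:Fin 5) 3, Equiv.swap (0:Fin 5) 3 * Equiv.swap (3:Fin 5) 1 * Equiv.swap (1:Fin 5) 2)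
]

set_option maxRecDepth 4000 in
lemma key1 : ∀ p : Perm (Fin 5), Perm.sign p = 1 → ∃ e ∈ L, e.1 = p := by decide

set_option maxRecDepth 4000 in
lemma key2 : ∀ e ∈ L, ⁅e.2.1, e.2.2⁆ * e.1 = 1 ∧
    ∀ x y : Fin 5, ∃ k : Fin 5, ((e.2.1 * e.2.2) ^ (k : ℕ)) x = y := by
  intro e he
  fin_cases he <;> exact ⟨by decide, by decide⟩

lemma multiset_classify (s : Multiset ℕ) (h2 : ∀ x ∈ s, 2 ≤ x) (h5 : s.sum ≤ 5) :
    IsOddType s ↔ Odd (s.sum + Multiset.card s) := by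
  have hcard : Multiset.card s • 2 ≤ s.sum := Multiset.card_nsmul_le_sum h2
  rw [smul_eq_mul] at hcard
  have hc2 : Multiset.card s = 0 ∨ Multiset.card s = 1 ∨ Multiset.card s = 2 := by omega
  rcases hc2 with h | h | h
  · rw [Multiset.card_eq_zero] at h
    subst h; decide
  · rw [Multiset.card_eq_one] at h
    obtain ⟨a, rfl⟩ := h
    have ha2 : 2 ≤ a := h2 a (Multiset.mem_singleton_self a)
    have ha5 : a ≤ 5 := by simpa using h5
    interval_cases a <;> decide
  · rw [Multiset.card_eq_two] at h
    obtain ⟨x, y, rfl⟩ := h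
    have hx2 : 2 ≤ x := h2 x (by simp)
    have hy2 : 2 ≤ y := h2 y (by simp)
    have hxy : x + y ≤ 5 := by simpa using h5
    have hx3 : x ≤ 3 := by omega
    have hy3 : y ≤ 3 := by omega
    interval_cases x <;> interval_cases y <;> first | decide | omega

lemma sign_iff (σ : Perm (Fin 5)) : IsOddType σ.cycleType ↔ Perm.sign σ = -1 := by
  have h2 : ∀ x ∈ σ.cycleType, 2 ≤ x := fun x h => Perm.two_le_of_mem_cycleType h
  have h5 : σ.cycleType.sum ≤ 5 := by
    rw [Perm.sum_cycleType]
    simpa using Finset.card_le_univ σ.support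
  rw [multiset_classify _ h2 h5, Perm.sign_of_cycleType]
  constructor
  · exact fun h => Odd.neg_one_pow h
  · intro h
    by_contra h'
    rw [Nat.not_odd_iff_even] at h'
    rw [Even.neg_one_pow h'] at h
    exact absurd h (by decide)

/-- If `g ≥ 1` and `(t 1, …, t n)` is an even tuple of cycle types of permutations of
`Fin 5`, then there is a generating `(g; m₁, …, mₙ)`-vector `(a₁, b₁, …, a_g, b_g,
c₁, …, cₙ)` of a transitive subgroup of `Perm (Fin 5)` with each `c j` of cycle
type `t j`. -/
theorem five_fold_covering_exists_iff_even_tuple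
    (g n : ℕ) (hg : 1 ≤ g) (t : Fin n → Multiset ℕ)
    (ht : ∀ i, ∃ σ : Equiv.Perm (Fin 5), σ.cycleType = t i)
    (heven : Even (Finset.univ.filter fun i => IsOddType (t i)).card) :
    ∃ (a b : Fin g → Equiv.Perm (Fin 5)) (c : Fin n → Equiv.Perm (Fin 5)),
      (List.ofFn fun i => ⁅a i, b i⁆).prod * (List.ofFn c).prod = 1 ∧
      (∀ j, (c j).cycleType = t j) ∧
      (∀ x y : Fin 5,
        ∃ σ ∈ Subgroup.closure (Set.range a ∪ Set.range b ∪ Set.range c), σ x = y) := by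
  choose c hc using ht
  obtain ⟨g', rfl⟩ : ∃ g', g = g' + 1 := ⟨g - 1, by omega⟩
  set p : Perm (Fin 5) := (List.ofFn c).prod with hp
  have hsign : Perm.sign p = 1 := by
    have h1 : Perm.sign p = ∏ i : Fin n, Perm.sign (c i) := by
      rw [hp, map_list_prod, List.map_ofFn, List.prod_ofFn]
      rfl
    have h2 : ∀ i : Fin n, Perm.sign (c i) = (-1 : ℤˣ) ^ (if IsOddType (t i) then 1 else 0) := by
      intro i
      have hodd : IsOddType (t i) ↔ Perm.sign (c i) = -1 := by
        rw [← hc i]; exact sign_iff (c i)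
      by_cases h : IsOddType (t i)
      · simp [h, hodd.mp h]
      · simp only [h, if_false, pow_zero]
        rcases Int.units_eq_one_or (Perm.sign (c i)) with h1 | h1
        · exact h1
        · exact absurd (hodd.mpr h1) h
    rw [h1, Finset.prod_congr rfl (fun i _ => h2 i), Finset.prod_pow_eq_pow_sum,
      ← Finset.card_filter]
    exact Even.neg_one_pow heven
  obtain ⟨e, heL, hep⟩ := key1 p hsign
  obtain ⟨hcomm, htrans⟩ := key2 e heL
  rw [hep] at hcomm
  refine ⟨fun i => if i = 0 then e.2.1 else 1, fun i => if i = 0 then e.2.2 else 1, c, ?_, hc, ?_⟩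
  · rw [List.ofFn_succ]
    have htail : (List.ofFn fun i : Fin g' =>
        ⁅(if (i.succ : Fin (g' + 1)) = 0 then e.2.1 else 1),
          (if (i.succ : Fin (g' + 1)) = 0 then e.2.2 else 1)⁆).prod = 1 := by
      apply List.prod_eq_one
      intro x hx
      rw [List.mem_ofFn] at hx
      obtain ⟨i, rfl⟩ := hx
      simp [Fin.succ_ne_zero]
    rw [List.prod_cons, htail]
    simpa using hcomm
  · intro x y
    obtain ⟨k, hk⟩ := htrans x y
    refine ⟨(e.2.1 * e.2.2) ^ (k : ℕ), ?_, hk⟩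
    refine Subgroup.pow_mem _ (Subgroup.mul_mem _ ?_ ?_) _
    · exact Subgroup.subset_closure (Set.mem_union_left _
        (Set.mem_union_left _ ⟨0, by simp⟩))
    · exact Subgroup.subset_closure (Set.mem_union_left _
        (Set.mem_union_right _ ⟨0, by simp⟩))
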